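/- Consider the iteration $v^{(k+1)}_i = v^{(k)}_i - \gamma \, s^{(k)}_i$ on sorted real vectors, where $s^{(k)}_i = \mathrm{sign}(v^{(k)}_{\sigma_k(i)} - w_i)$ with $\sigma_k$ the sorting permutation at step $k$, started from distinct initial points $v^{(0)}_1, \dots, v^{(0)}_n$. Define $W_k = \min_{\sigma} \max_i |v^{(k)}_{\sigma(i)} - w_i|$. Then $W_{k+1} \le \max\{W_k - \gamma, \gamma\}$ for all $k$, and consequently $W_k \le \gamma$ for all $k \ge \lfloor W_0/\gamma \rfloor + 1$. -/

import Mathlib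

open Finset

lemma perm_pigeonhole {n : ℕ} (π : Equiv.Perm (Fin n)) (i : Fin n) :
    ∃ j, j ≤ i ∧ i ≤ π j := by
  by_contra h
  push_neg at h
  have hsub : ∀ j ∈ Finset.Iic i, π j ∈ Finset.Iio i := fun j hj =>
    Finset.mem_Iio.mpr (h j (Finset.mem_Iic.mp hj))
  have hcard := Finset.card_le_card_of_injOn π hsub (π.injective.injOn)
  rw [Fin.card_Iic, Fin.card_Iio] at hcard
  omega

lemma rearrange {n : ℕ} (hn : 0 < n) {u w : Fin n → ℝ} (hu : Monotone u) (hw : Monotone w)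
    (π : Equiv.Perm (Fin n)) (i : Fin n) :
    haveI : Nonempty (Fin n) := ⟨⟨0, hn⟩⟩
    |u i - w i| ≤ Finset.univ.sup' Finset.univ_nonempty (fun j => |u (π j) - w j|) := by
  haveI : Nonempty (Fin n) := ⟨⟨0, hn⟩⟩
  obtain ⟨j₁, hj₁, hij₁⟩ := perm_pigeonhole π i
  obtain ⟨j₂', hj₂', hij₂'⟩ := perm_pigeonhole π⁻¹ i
  rw [abs_sub_le_iff]
  constructor
  · calc u i - w i ≤ u (π j₁) - w j₁ := sub_le_sub (hu hij₁) (hw hj₁)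
      _ ≤ |u (π j₁) - w j₁| := le_abs_self _
      _ ≤ _ := Finset.le_sup' (fun j => |u (π j) - w j|) (Finset.mem_univ j₁)
  · have hππ : π (π⁻¹ j₂') = j₂' := Equiv.apply_symm_apply π j₂'
    calc w i - u i ≤ w (π⁻¹ j₂') - u (π (π⁻¹ j₂')) := by
          refine sub_le_sub (hw hij₂') (hu ?_)
          rw [hππ]; exact hj₂'
      _ ≤ |u (π (π⁻¹ j₂')) - w (π⁻¹ j₂')| := by
          rw [abs_sub_comm]; exact le_abs_self _
      _ ≤ _ := Finset.le_sup' (fun j => |u (π j) - w j|) (Finset.mem_univ (π⁻¹ j₂'))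

lemma sign_step (d γ : ℝ) (hγ : 0 < γ) :
    |d - γ * Real.sign d| ≤ max (|d| - γ) γ := by
  rcases lt_trichotomy d 0 with h | h | h
  · rw [Real.sign_of_neg h, abs_of_neg h, show d - γ * (-1) = d + γ by ring]
    rcases le_total (-d) γ with h2 | h2
    · rw [abs_of_nonneg (by linarith)]
      exact le_max_of_le_right (by linarith)
    · rw [abs_of_nonpos (by linarith)]
      exact le_max_of_le_left (by linarith)
  · subst h
    rw [Real.sign_zero, mul_zero, sub_zero, abs_zero]
    exact le_max_of_le_right hγ.le
  · rw [Real.sign_of_pos h, abs_of_pos h, show d - γ * 1 = d - γ by ring]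
    rcases le_total d γ with h2 | h2
    · rw [abs_of_nonpos (by linarith)]
      exact le_max_of_le_right (by linarith)
    · rw [abs_of_nonneg (by linarith)]
      exact le_max_of_le_left (by linarith)

theorem gd_convergence (n : ℕ) (hn : 0 < n) (w : Fin n → ℝ)
    (hw : Monotone w) (hwinj : Function.Injective w)
    (γ : ℝ) (hγ : 0 < γ)
    (v : ℕ → Fin n → ℝ) (σ : ℕ → Equiv.Perm (Fin n))
    (hsort : ∀ k, Monotone (fun i => v k (σ k i)))
    (hupd : ∀ k i, v (k + 1) (σ k i) = v k (σ k i) - γ * Real.sign (v k (σ k i) - w i))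
    (hinit : Function.Injective (v 0)) :
    haveI : Nonempty (Fin n) := ⟨⟨0, hn⟩⟩
    let W : ℕ → ℝ := fun k =>
      Finset.univ.inf' Finset.univ_nonempty
        (fun τ : Equiv.Perm (Fin n) =>
          Finset.univ.sup' Finset.univ_nonempty (fun i => |v k (τ i) - w i|))
    (∀ k, W (k + 1) ≤ max (W k - γ) γ) ∧
      ∀ k, ⌊W 0 / γ⌋₊ + 1 ≤ k → W k ≤ γ := by
  haveI : Nonempty (Fin n) := ⟨⟨0, hn⟩⟩
  intro W
  have hWle : ∀ k (τ : Equiv.Perm (Fin n)), W k ≤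
      Finset.univ.sup' Finset.univ_nonempty (fun i => |v k (τ i) - w i|) :=
    fun k τ => Finset.inf'_le _ (Finset.mem_univ τ)
  have hWge : ∀ k i, |v k (σ k i) - w i| ≤ W k := by
    intro k i
    obtain ⟨τ₀, -, hτ₀⟩ := Finset.exists_mem_eq_inf' (Finset.univ_nonempty)
      (fun τ : Equiv.Perm (Fin n) =>
        Finset.univ.sup' Finset.univ_nonempty (fun i => |v k (τ i) - w i|))
    have h := rearrange hn (hsort k) hw (τ₀.trans (σ k)⁻¹) i
    simp only [Equiv.trans_apply] at h
    have heq : ∀ j : Fin n, v k (σ k ((σ k)⁻¹ (τ₀ j))) = v k (τ₀ j) := by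
      intro j; congr 1; exact Equiv.apply_symm_apply (σ k) _
    simp only [heq] at h
    have hWk : W k = Finset.univ.sup' Finset.univ_nonempty (fun i => |v k (τ₀ i) - w i|) := hτ₀
    rw [hWk]; exact h
  have part1 : ∀ k, W (k + 1) ≤ max (W k - γ) γ := by
    intro k
    refine le_trans (hWle (k + 1) (σ k)) (Finset.sup'_le _ _ ?_)
    intro i _
    rw [hupd k i]
    have h1 := sign_step (v k (σ k i) - w i) γ hγ
    have h2 := hWge k i
    calc |v k (σ k i) - γ * Real.sign (v k (σ k i) - w i) - w i|
        = |(v k (σ k i) - w i) - γ * Real.sign (v k (σ k i) - w i)| := by congr 1; ring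
      _ ≤ max (|v k (σ k i) - w i| - γ) γ := h1
      _ ≤ max (W k - γ) γ := max_le_max (by linarith) le_rfl
  have hW0 : 0 ≤ W 0 := le_trans (abs_nonneg _) (hWge 0 ⟨0, hn⟩)
  have hbound : ∀ k : ℕ, W k ≤ max (W 0 - k * γ) γ := by
    intro k
    induction k with
    | zero => simpa using le_max_left (W 0) γ
    | succ k ih =>
      refine le_trans (part1 k) (max_le ?_ (le_max_right _ _))
      rcases le_total (W 0 - k * γ) γ with h | h
      · have hk : W k ≤ γ := le_trans ih (max_le h le_rfl)
        exact le_max_of_le_right (by linarith)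
      · have hk : W k ≤ W 0 - k * γ := le_trans ih (max_le le_rfl h)
        apply le_max_of_le_left
        push_cast
        linarith
  refine ⟨part1, fun k hk => ?_⟩
  have h1 : W 0 / γ < (⌊W 0 / γ⌋₊ + 1 : ℕ) := by
    push_cast; exact Nat.lt_floor_add_one _
  have h2 : W 0 < ((⌊W 0 / γ⌋₊ + 1 : ℕ) : ℝ) * γ := (div_lt_iff₀ hγ).mp h1
  have h3 : ((⌊W 0 / γ⌋₊ + 1 : ℕ) : ℝ) * γ ≤ (k : ℝ) * γ := by
    apply mul_le_mul_of_nonneg_right _ hγ.le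
    exact_mod_cast hk
  exact le_trans (hbound k) (max_le (by linarith) le_rfl)
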